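/- Let X be a metric space that is finitely injective: for all finite metric spaces K ⊆ L, every isometric (distance-preserving) embedding K → X extends to an isometric embedding L → X. Let K be a finite set carrying two pseudometrics μ and λ, let R be the diameter of (K, λ), and fix a ∈ K. Then for every distance-preserving map i : (K, μ) → X there exists a distance-preserving map j : (K, μ + λ) → X with j(a) = i(a) and d(i(x), j(x)) ≤ λ(x, a) ≤ R for every x ∈ K. -/

import Mathlib

/-- A metric space `X` is finitely injective: for all finite metric spaces
`K ⊆ L`, every isometric embedding `K → X` extends to `L`. -/
def FinitelyInjective (X : Type*) [MetricSpace X] : Prop :=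
  ∀ (L : Type) (_ : MetricSpace L) (_ : Finite L) (K : Set L) (f : K → X),
    Isometry f → ∃ g : L → X, Isometry g ∧ ∀ k : K, g k = f k

/-- A pseudometric on a set, given as a plain function. -/
def IsPseudometric {K : Type*} (d : K → K → ℝ) : Prop :=
  (∀ x y, 0 ≤ d x y) ∧ (∀ x, d x x = 0) ∧ (∀ x y, d x y = d y x) ∧
    (∀ x y z, d x z ≤ d x y + d y z)

theorem approx_embedding_of_finitelyInjective {X : Type*} [MetricSpace X]
    (hX : FinitelyInjective X) (K : Type) [Finite K]
    (μ lam : K → K → ℝ) (hμ : IsPseudometric μ) (hlam : IsPseudometric lam)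
    (R : ℝ) (hR : R = ⨆ x : K, ⨆ y : K, lam x y) (a : K)
    (i : K → X) (hi : ∀ x y, dist (i x) (i y) = μ x y) :
    ∃ j : K → X, (∀ x y, dist (j x) (j y) = μ x y + lam x y) ∧ j a = i a ∧
      ∀ x, dist (i x) (j x) ≤ lam x a ∧ lam x a ≤ R := by
  obtain ⟨hμ0, hμs, hμc, hμt⟩ := hμ
  obtain ⟨hl0, hls, hlc, hlt⟩ := hlam
  -- the amalgam pseudometric on two copies of K
  have hμ0' : ∀ x, 0 ≤ μ x x := fun x => hμ0 x x
  letI : Dist (K ⊕ K) :=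
    ⟨fun p q => match p, q with
      | .inl x, .inl y => μ x y
      | .inl x, .inr y => μ x y + lam y a
      | .inr x, .inl y => μ x y + lam x a
      | .inr x, .inr y => μ x y + lam x y⟩
  letI P : PseudoMetricSpace (K ⊕ K) :=
    { dist_self := by
        rintro (x | x) <;> simp +zetaDelta [dist, hμs, hls]
      dist_comm := by
        rintro (x | x) (y | y) <;> simp +zetaDelta [dist, hμc x y, hlc x y]
      dist_triangle := by
        have t1 : ∀ x y, lam x a ≤ lam x y + lam y a := fun x y => hlt x y a
        have t2 : ∀ x y, lam x a ≤ lam y a + lam x y := fun x y => by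
          have := hlt x y a; have := hlc x y; linarith
        have t3 : ∀ x y, lam x y ≤ lam x a + lam y a := fun x y => by
          have := hlt x a y; have := hlc a y; linarith
        rintro (x | x) (y | y) (z | z) <;>
          simp +zetaDelta only [dist] <;>
          [skip; skip; skip; skip; skip; skip; skip; skip] <;>
          · have h1 := hμt x y z
            have h2 := hl0 x y; have h3 := hl0 y z; have h4 := hl0 x z
            have h5 := hl0 y a; have h6 := hl0 x a; have h7 := hl0 z a
            have := t1 x y; have := t1 y z; have := t1 x z
            have := t2 x y; have := t2 y z; have := t2 x z
            have := t3 x y; have := t3 y z; have := t3 x z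
            have := t1 y x; have := t1 z y; have := t1 z x
            have := hlc x y; have := hlc y z; have := hlc x z
            have := hlt x y z; have := hlt z y x
            linarith }
  set L := SeparationQuotient (K ⊕ K) with hL
  haveI : Finite L := Finite.of_surjective _ SeparationQuotient.surjective_mk
  have dmk : ∀ p q : K ⊕ K, dist (SeparationQuotient.mk p) (SeparationQuotient.mk q)
      = dist p q := SeparationQuotient.dist_mk
  set Kset : Set L := Set.range (fun x : K => SeparationQuotient.mk (Sum.inl x : K ⊕ K)) with hKset
  -- the map on the subset
  have hwd : ∀ (x y : K), SeparationQuotient.mk (Sum.inl x : K ⊕ K) = SeparationQuotient.mk (Sum.inl y : K ⊕ K)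
      → i x = i y := by
    intro x y h
    rw [SeparationQuotient.mk_eq_mk, Metric.inseparable_iff] at h
    have : dist (Sum.inl x : K ⊕ K) (Sum.inl y) = μ x y := rfl
    apply dist_le_zero.mp
    rw [hi x y]; rw [this] at h; rw [h]
  haveI : Nonempty K := ⟨a⟩
  set e : K → L := fun x => SeparationQuotient.mk (Sum.inl x : K ⊕ K) with he
  set f : Kset → X := fun k => i (Function.invFun e k.1) with hf
  have hinv : ∀ x : K, e (Function.invFun e (e x)) = e x :=
    fun x => Function.invFun_eq ⟨x, rfl⟩
  have hfval : ∀ x : K, f ⟨e x, ⟨x, rfl⟩⟩ = i x := fun x => hwd _ _ (hinv x)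
  have hfiso : Isometry f := by
    rw [isometry_iff_dist_eq]
    rintro ⟨q1, x1, hx1⟩ ⟨q2, x2, hx2⟩
    show dist (i (Function.invFun e q1)) (i (Function.invFun e q2)) = dist q1 q2
    have e1 : e (Function.invFun e q1) = q1 := Function.invFun_eq ⟨x1, hx1⟩
    have e2 : e (Function.invFun e q2) = q2 := Function.invFun_eq ⟨x2, hx2⟩
    rw [hi]
    have : dist q1 q2 = dist (e (Function.invFun e q1)) (e (Function.invFun e q2)) := by
      rw [e1, e2]
    rw [this]
    exact Eq.symm (dmk (Sum.inl (Function.invFun e q1)) (Sum.inl (Function.invFun e q2)))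
  obtain ⟨g, hgiso, hgext⟩ := hX L inferInstance inferInstance Kset f hfiso
  have hgl : ∀ x : K, g (SeparationQuotient.mk (Sum.inl x : K ⊕ K)) = i x := by
    intro x
    have h := hgext ⟨e x, ⟨x, rfl⟩⟩
    rw [hfval] at h
    exact h
  have hgd := isometry_iff_dist_eq.mp hgiso
  refine ⟨fun x => g (SeparationQuotient.mk (Sum.inr x : K ⊕ K)), ?_, ?_, ?_⟩
  · intro x y
    show dist (g (SeparationQuotient.mk (Sum.inr x : K ⊕ K)))
      (g (SeparationQuotient.mk (Sum.inr y : K ⊕ K))) = _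
    rw [hgd, dmk]; rfl
  · show g (SeparationQuotient.mk (Sum.inr a : K ⊕ K)) = i a
    have : SeparationQuotient.mk (Sum.inr a : K ⊕ K) = SeparationQuotient.mk (Sum.inl a : K ⊕ K) := by
      rw [SeparationQuotient.mk_eq_mk, Metric.inseparable_iff]
      show μ a a + lam a a = 0
      rw [hμs, hls]; ring
    rw [this, hgl]
  · intro x
    constructor
    · show dist (i x) (g (SeparationQuotient.mk (Sum.inr x : K ⊕ K))) ≤ _
      rw [← hgl x, hgd, dmk]
      show μ x x + lam x a ≤ lam x a
      rw [hμs]; linarith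
    · rw [hR]
      have bdd1 : BddAbove (Set.range fun y : K => lam x y) :=
        (Set.finite_range _).bddAbove
      have bdd2 : BddAbove (Set.range fun x : K => ⨆ y : K, lam x y) :=
        (Set.finite_range _).bddAbove
      calc lam x a ≤ ⨆ y : K, lam x y := le_ciSup bdd1 a
        _ ≤ ⨆ x : K, ⨆ y : K, lam x y := le_ciSup bdd2 x
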